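/- Let k ≥ 10^8 and let the edges of K_k be added one at a time in some order, giving graphs G_0 ⊆ ... ⊆ G_{C(k,2)}. Then there exists a vertex v such that for at least k^2/3 − k^2/(log k)^2 edges {w_i, w_j}, at the time just before the edge {w_i, w_j} was added, both w_i and w_j were already in the same connected component as v. -/

import Mathlib

open Finset SimpleGraph

lemma reach_sup_edge {V : Type*} {H : SimpleGraph V} {x y u w : V}
    (h : (H ⊔ SimpleGraph.edge x y).Reachable u w) :
    H.Reachable u w ∨ (H.Reachable u x ∧ H.Reachable y w) ∨
      (H.Reachable u y ∧ H.Reachable x w) := by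
  obtain ⟨p⟩ := h
  induction p with
  | nil => exact Or.inl (Reachable.refl _)
  | @cons u v w h q ih =>
    rcases h with h | h
    · have huv : H.Reachable u v := h.reachable
      rcases ih with h1 | ⟨h1, h2⟩ | ⟨h1, h2⟩
      · exact Or.inl (huv.trans h1)
      · exact Or.inr (Or.inl ⟨huv.trans h1, h2⟩)
      · exact Or.inr (Or.inr ⟨huv.trans h1, h2⟩)
    · rw [edge_adj] at h
      obtain ⟨⟨hu, hv⟩ | ⟨hu, hv⟩, _⟩ := h
      all_goals subst hu; subst hv
      · rcases ih with h1 | ⟨h1, h2⟩ | ⟨h1, h2⟩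
        · exact Or.inr (Or.inl ⟨Reachable.refl _, h1⟩)
        · exact Or.inr (Or.inl ⟨Reachable.refl _, h2⟩)
        · exact Or.inl h2
      · rcases ih with h1 | ⟨h1, h2⟩ | ⟨h1, h2⟩
        · exact Or.inr (Or.inr ⟨Reachable.refl _, h1⟩)
        · exact Or.inl h2
        · exact Or.inr (Or.inr ⟨Reachable.refl _, h2⟩)

section aux3
variable {k : ℕ} {σ : Sym2 (Fin k) → ℕ} {G : ℕ → SimpleGraph (Fin k)}
variable (hσ : Set.BijOn σ {e : Sym2 (Fin k) | ¬ e.IsDiag} (Set.Icc 1 (k * (k - 1) / 2)))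
variable (hG : ∀ t, G t = SimpleGraph.fromEdgeSet {e : Sym2 (Fin k) | σ e ≤ t})

lemma gmono' (hG : ∀ t, G t = SimpleGraph.fromEdgeSet {e : Sym2 (Fin k) | σ e ≤ t})
    {t t' : ℕ} (h : t ≤ t') : G t ≤ G t' := by
  rw [hG t, hG t']
  exact fromEdgeSet_mono fun e he => le_trans he h

lemma adj_iff'' (hG : ∀ t, G t = SimpleGraph.fromEdgeSet {e : Sym2 (Fin k) | σ e ≤ t})
    {t : ℕ} {a b : Fin k} : (G t).Adj a b ↔ σ s(a, b) ≤ t ∧ a ≠ b := by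
  rw [hG t, fromEdgeSet_adj]; rfl

include hσ hG in
lemma step_graph' {t : ℕ} (ht : 1 ≤ t) {x y : Fin k} (hxy : x ≠ y) (hσt : σ s(x, y) = t) :
    G t = G (t - 1) ⊔ SimpleGraph.edge x y := by
  ext a b
  rw [sup_adj, adj_iff'' hG, adj_iff'' hG, edge_adj]
  constructor
  · rintro ⟨hle, hab⟩
    rcases Nat.lt_or_ge (σ s(a, b)) t with h | h
    · exact Or.inl ⟨by omega, hab⟩
    · have heq : s(a, b) = s(x, y) := by
        apply hσ.injOn (by simpa using hab) (by simpa using hxy)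
        omega
      rw [Sym2.eq_iff] at heq
      exact Or.inr ⟨heq, hab⟩
  · rintro (⟨h1, h2⟩ | ⟨h1, h2⟩)
    · exact ⟨by omega, h2⟩
    · refine ⟨?_, h2⟩
      have : s(a, b) = s(x, y) := Sym2.eq_iff.2 h1
      rw [this]; omega

include hσ hG in
lemma step_reach {t : ℕ} (ht : 1 ≤ t) {x y : Fin k} (hxy : x ≠ y) (hσt : σ s(x, y) = t)
    (u w : Fin k) :
    (G t).Reachable u w ↔ ((G (t - 1)).Reachable u w ∨
      ((G (t - 1)).Reachable u x ∧ (G (t - 1)).Reachable y w) ∨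
      ((G (t - 1)).Reachable u y ∧ (G (t - 1)).Reachable x w)) := by
  constructor
  · intro h
    rw [step_graph' hσ hG ht hxy hσt] at h
    exact reach_sup_edge h
  · have hmle : ∀ {a b : Fin k}, (G (t - 1)).Reachable a b → (G t).Reachable a b :=
      fun h => h.mono (gmono' hG (by omega))
    have hadj : (G t).Reachable x y :=
      ((adj_iff'' hG).2 ⟨by omega, hxy⟩).reachable
    rintro (h | ⟨h1, h2⟩ | ⟨h1, h2⟩)
    · exact hmle h
    · exact ((hmle h1).trans hadj).trans (hmle h2)
    · exact ((hmle h1).trans hadj.symm).trans (hmle h2)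



include hσ hG in
lemma reach_top (a b : Fin k) : (G (k * (k - 1) / 2)).Reachable a b := by
  rcases eq_or_ne a b with rfl | h
  · exact Reachable.refl _
  · refine ((adj_iff'' hG).2 ⟨?_, h⟩).reachable
    exact (Set.mem_Icc.1 (hσ.mapsTo
      (by simpa using h : s(a, b) ∈ {e : Sym2 (Fin k) | ¬ e.IsDiag}))).2

include hσ hG in
lemma step_phi (C : ℕ → Fin k → Finset (Fin k))
    (hC : ∀ t v w, w ∈ C t v ↔ (G t).Reachable v w)
    (find : Fin k × Fin k × Fin k → ℕ)
    (hfs : ∀ p, (G (find p)).Reachable p.1 p.2.1 ∧ (G (find p)).Reachable p.1 p.2.2)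
    (hfm : ∀ p m, m < find p →
      ¬((G m).Reachable p.1 p.2.1 ∧ (G m).Reachable p.1 p.2.2))
    (Bad : Finset (Fin k × Fin k × Fin k))
    (hBad : ∀ p, p ∈ Bad ↔ (p.2.1 ≠ p.2.2 ∧
      ¬((G (σ s(p.2.1, p.2.2) - 1)).Reachable p.1 p.2.1 ∧
        (G (σ s(p.2.1, p.2.2) - 1)).Reachable p.1 p.2.2)))
    {t : ℕ} (ht1 : 1 ≤ t) (ht2 : t ≤ k * (k - 1) / 2) :
    (∑ v, ((C (t - 1) v).card * (C (t - 1) v).card + 6 * (C (t - 1) v).card)) +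
      3 * #(Bad.filter fun p => find p = t) ≤
    ∑ v, ((C t v).card * (C t v).card + 6 * (C t v).card) := by
  classical
  obtain ⟨e, he1, he2⟩ := hσ.surjOn (Set.mem_Icc.2 ⟨ht1, ht2⟩)
  obtain ⟨x, y, rfl⟩ : ∃ x y, e = s(x, y) :=
    Sym2.ind (f := fun z => ∃ x y, z = s(x, y)) (fun x y => ⟨x, y, rfl⟩) e
  have hxy : x ≠ y := by simpa using he1
  have hstep := step_reach hσ hG ht1 hxy he2
  by_cases hxyr : (G (t - 1)).Reachable x y
  · -- no merge
    have hReq : ∀ u w, (G t).Reachable u w ↔ (G (t - 1)).Reachable u w := by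
      intro u w
      rw [hstep u w]
      constructor
      · rintro (h | ⟨h1, h2⟩ | ⟨h1, h2⟩)
        · exact h
        · exact (h1.trans hxyr).trans h2
        · exact (h1.trans hxyr.symm).trans h2
      · exact Or.inl
    have hCeq : ∀ v, C (t - 1) v = C t v := by
      intro v
      ext w
      rw [hC, hC, hReq]
    have hN0 : (Bad.filter fun p => find p = t) = ∅ := by
      rw [Finset.filter_eq_empty_iff]
      rintro p hp hft
      have hspec := hfs p
      rw [hft] at hspec
      exact hfm p (t - 1) (by omega) ⟨(hReq _ _).1 hspec.1, (hReq _ _).1 hspec.2⟩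
    simp only [hN0, Finset.card_empty, Nat.mul_zero, Nat.add_zero]
    exact le_of_eq (by simp only [hCeq])
  · -- merge
    set A := C (t - 1) x with hA
    set B := C (t - 1) y with hB
    have hmemA : ∀ v, v ∈ A ↔ (G (t - 1)).Reachable x v := fun v => hC _ _ _
    have hmemB : ∀ v, v ∈ B ↔ (G (t - 1)).Reachable y v := fun v => hC _ _ _
    have hxA : x ∈ A := (hmemA x).2 (Reachable.refl _)
    have hyB : y ∈ B := (hmemB y).2 (Reachable.refl _)
    have hdisj : Disjoint A B := by
      rw [Finset.disjoint_left]
      intro w hw1 hw2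
      exact hxyr (((hmemA w).1 hw1).trans ((hmemB w).1 hw2).symm)
    have hCtAB : ∀ v, v ∈ A ∪ B → C t v = A ∪ B := by
      intro v hv
      ext w
      rw [hC, hstep v w, Finset.mem_union, hmemA, hmemB]
      rcases Finset.mem_union.1 hv with hv | hv
      · have hxv := (hmemA v).1 hv
        constructor
        · rintro (h | ⟨h1, h2⟩ | ⟨h1, h2⟩)
          · exact Or.inl (hxv.trans h)
          · exact Or.inr h2
          · exact Or.inl h2
        · rintro (h | h)
          · exact Or.inl (hxv.symm.trans h)
          · exact Or.inr (Or.inl ⟨hxv.symm, h⟩)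
      · have hyv := (hmemB v).1 hv
        constructor
        · rintro (h | ⟨h1, h2⟩ | ⟨h1, h2⟩)
          · exact Or.inr (hyv.trans h)
          · exact Or.inr h2
          · exact Or.inl h2
        · rintro (h | h)
          · exact Or.inr (Or.inr ⟨hyv.symm, h⟩)
          · exact Or.inl (hyv.symm.trans h)
    have hCtO : ∀ v, v ∉ A ∪ B → C t v = C (t - 1) v := by
      intro v hv
      rw [Finset.mem_union] at hv
      push_neg at hv
      ext w
      rw [hC, hC, hstep v w]
      constructor
      · rintro (h | ⟨h1, h2⟩ | ⟨h1, h2⟩)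
        · exact h
        · exact absurd ((hmemA v).2 h1.symm) hv.1
        · exact absurd ((hmemB v).2 h1.symm) hv.2
      · exact Or.inl
    have hCpA : ∀ v, v ∈ A → C (t - 1) v = A := by
      intro v hv
      have hxv := (hmemA v).1 hv
      ext w
      rw [hC, hmemA]
      exact ⟨fun h => hxv.trans h, fun h => hxv.symm.trans h⟩
    have hCpB : ∀ v, v ∈ B → C (t - 1) v = B := by
      intro v hv
      have hyv := (hmemB v).1 hv
      ext w
      rw [hC, hmemB]
      exact ⟨fun h => hyv.trans h, fun h => hyv.symm.trans h⟩
    -- the subset bound on bad triples at time t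
    have hsubset : (Bad.filter fun p => find p = t) ⊆
        (A ×ˢ B ×ˢ B) ∪ (B ×ˢ A ×ˢ A) ∪ ((A ∪ B) ×ˢ {(x, y), (y, x)}) := by
      rintro ⟨v, a, b⟩ hp
      rw [Finset.mem_filter] at hp
      obtain ⟨hpB, hft⟩ := hp
      rw [hBad] at hpB
      obtain ⟨hab, hnr⟩ := hpB
      dsimp only at hab hnr
      have hspec := hfs (v, a, b)
      dsimp only at hspec
      rw [hft] at hspec
      obtain ⟨hva, hvb⟩ := hspec
      have hrm : ∀ {t1 t2 : ℕ}, t1 ≤ t2 → ∀ {u w : Fin k},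
          (G t1).Reachable u w → (G t2).Reachable u w :=
        fun h _ _ hr => hr.mono (gmono' hG h)
      have hmin : ¬((G (t - 1)).Reachable v a ∧ (G (t - 1)).Reachable v b) :=
        hfm (v, a, b) (t - 1) (by rw [hft]; omega)
      have hσ1 : 1 ≤ σ s(a, b) := (Set.mem_Icc.1 (hσ.mapsTo (by simpa using hab))).1
      have hσle : σ s(a, b) ≤ t := by
        by_contra h
        push_neg at h
        exact hnr ⟨hrm (by omega) hva, hrm (by omega) hvb⟩
      simp only [Finset.mem_union, Finset.mem_product]
      rcases Nat.lt_or_ge (σ s(a, b)) t with hlt | hge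
      · -- the edge a-b is already present at time t-1
        have hadj : (G (t - 1)).Reachable a b :=
          ((adj_iff'' hG).2 ⟨by omega, hab⟩).reachable
        have hnva : ¬(G (t - 1)).Reachable v a := fun h => hmin ⟨h, h.trans hadj⟩
        rcases (hstep v a).1 hva with h | ⟨h1, h2⟩ | ⟨h1, h2⟩
        · exact absurd h hnva
        · exact Or.inl (Or.inl ⟨(hmemA v).2 h1.symm, (hmemB a).2 h2,
            (hmemB b).2 (h2.trans hadj)⟩)
        · exact Or.inl (Or.inr ⟨(hmemB v).2 h1.symm, (hmemA a).2 h2,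
            (hmemA b).2 (h2.trans hadj)⟩)
      · have hσt : σ s(a, b) = t := le_antisymm hσle hge
        have heq : s(a, b) = s(x, y) :=
          hσ.injOn (by simpa using hab) (by simpa using hxy) (by rw [hσt, he2])
        rw [Sym2.eq_iff] at heq
        refine Or.inr ⟨?_, ?_⟩
        · -- v ∈ A ∪ B
          rw [hmemA, hmemB]
          rcases (hstep v a).1 hva with h | ⟨h1, h2⟩ | ⟨h1, h2⟩
          · rcases heq with ⟨rfl, rfl⟩ | ⟨rfl, rfl⟩
            · exact Or.inl h.symm
            · exact Or.inr h.symm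
          · exact Or.inl h1.symm
          · exact Or.inr h1.symm
        · rcases heq with ⟨rfl, rfl⟩ | ⟨rfl, rfl⟩ <;> simp
    -- cardinality bound
    have ha1 : 1 ≤ A.card := Finset.card_pos.2 ⟨x, hxA⟩
    have hb1 : 1 ≤ B.card := Finset.card_pos.2 ⟨y, hyB⟩
    have hcard : #(Bad.filter fun p => find p = t) ≤
        A.card * (B.card * B.card) + B.card * (A.card * A.card) +
          (A.card + B.card) * 2 := by
      refine (Finset.card_le_card hsubset).trans ?_
      refine (Finset.card_union_le _ _).trans ?_
      have h1 : ((A ×ˢ B ×ˢ B) ∪ (B ×ˢ A ×ˢ A)).card ≤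
          A.card * (B.card * B.card) + B.card * (A.card * A.card) := by
        refine (Finset.card_union_le _ _).trans ?_
        simp [Finset.card_product]
      have h2 : (((A ∪ B) ×ˢ ({(x, y), (y, x)} : Finset (Fin k × Fin k)))).card ≤
          (A.card + B.card) * 2 := by
        rw [Finset.card_product]
        exact Nat.mul_le_mul (Finset.card_union_le _ _)
          ((Finset.card_insert_le _ _).trans (by simp))
      omega
    -- sum computation
    have hsplit : ∀ g : Fin k → ℕ,
        ∑ v, g v = ∑ v ∈ A ∪ B, g v + ∑ v ∈ Finset.univ \ (A ∪ B), g v := by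
      intro g
      rw [add_comm, Finset.sum_sdiff (Finset.subset_univ _)]
    have hS1 : ∑ v ∈ A ∪ B, ((C t v).card * (C t v).card + 6 * (C t v).card) =
        (A.card + B.card) *
          ((A.card + B.card) * (A.card + B.card) + 6 * (A.card + B.card)) := by
      rw [Finset.sum_congr rfl fun v hv => by
        rw [hCtAB v hv, Finset.card_union_of_disjoint hdisj]]
      rw [Finset.sum_const, Finset.card_union_of_disjoint hdisj, smul_eq_mul]
    have hS2 : ∑ v ∈ A ∪ B, ((C (t-1) v).card * (C (t-1) v).card + 6 * (C (t-1) v).card) =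
        A.card * (A.card * A.card + 6 * A.card) +
          B.card * (B.card * B.card + 6 * B.card) := by
      rw [Finset.sum_union hdisj]
      congr 1
      · rw [Finset.sum_congr rfl fun v hv => by rw [hCpA v hv]]
        rw [Finset.sum_const, smul_eq_mul]
      · rw [Finset.sum_congr rfl fun v hv => by rw [hCpB v hv]]
        rw [Finset.sum_const, smul_eq_mul]
    have hS3 : ∑ v ∈ Finset.univ \ (A ∪ B),
          ((C t v).card * (C t v).card + 6 * (C t v).card) =
        ∑ v ∈ Finset.univ \ (A ∪ B),
          ((C (t-1) v).card * (C (t-1) v).card + 6 * (C (t-1) v).card) := by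
      refine Finset.sum_congr rfl fun v hv => ?_
      rw [hCtO v (Finset.mem_sdiff.1 hv).2]
    rw [hsplit fun v => ((C t v).card * (C t v).card + 6 * (C t v).card),
      hsplit fun v => ((C (t-1) v).card * (C (t-1) v).card + 6 * (C (t-1) v).card),
      hS1, hS2, hS3]
    set a := A.card
    set b := B.card
    have key : a * (a * a + 6 * a) + b * (b * b + 6 * b) +
        3 * (a * (b * b) + b * (a * a) + (a + b) * 2) ≤
        (a + b) * ((a + b) * (a + b) + 6 * (a + b)) := by
      have h1 : a * 1 ≤ a * b := Nat.mul_le_mul_left a hb1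
      have h2 : 1 * b ≤ a * b := Nat.mul_le_mul_right b ha1
      nlinarith [h1, h2]
    omega

include hσ hG in
lemma bad_le (C : ℕ → Fin k → Finset (Fin k))
    (hC : ∀ t v w, w ∈ C t v ↔ (G t).Reachable v w)
    (find : Fin k × Fin k × Fin k → ℕ)
    (hfs : ∀ p, (G (find p)).Reachable p.1 p.2.1 ∧ (G (find p)).Reachable p.1 p.2.2)
    (hfm : ∀ p m, m < find p →
      ¬((G m).Reachable p.1 p.2.1 ∧ (G m).Reachable p.1 p.2.2))
    (Bad : Finset (Fin k × Fin k × Fin k))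
    (hBad : ∀ p, p ∈ Bad ↔ (p.2.1 ≠ p.2.2 ∧
      ¬((G (σ s(p.2.1, p.2.2) - 1)).Reachable p.1 p.2.1 ∧
        (G (σ s(p.2.1, p.2.2) - 1)).Reachable p.1 p.2.2))) :
    7 * k + 3 * Bad.card ≤ k * (k * k + 6 * k) := by
  classical
  have hrm : ∀ {t1 t2 : ℕ}, t1 ≤ t2 → ∀ {u w : Fin k},
      (G t1).Reachable u w → (G t2).Reachable u w :=
    fun h _ _ hr => hr.mono (gmono' hG h)
  have hΦ0 : (∑ v, ((C 0 v).card * (C 0 v).card + 6 * (C 0 v).card)) = 7 * k := by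
    have hG0 : G 0 = ⊥ := by
      ext a b
      rw [adj_iff'' hG]
      simp only [SimpleGraph.bot_adj, iff_false, not_and]
      intro h hab
      have := (Set.mem_Icc.1 (hσ.mapsTo
        (by simpa using hab : s(a, b) ∈ {e : Sym2 (Fin k) | ¬ e.IsDiag}))).1
      omega
    have hC0 : ∀ v : Fin k, C 0 v = {v} := by
      intro v
      ext w
      rw [hC, hG0, reachable_bot]
      simp [eq_comm]
    rw [Finset.sum_congr rfl fun v _ => by rw [hC0 v, Finset.card_singleton]]
    simp only [Finset.sum_const, Finset.card_univ, Fintype.card_fin, smul_eq_mul]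
    ring
  have hΦT : (∑ v, ((C (k * (k - 1) / 2) v).card * (C (k * (k - 1) / 2) v).card +
      6 * (C (k * (k - 1) / 2) v).card)) = k * (k * k + 6 * k) := by
    have hCT : ∀ v : Fin k, C (k * (k - 1) / 2) v = Finset.univ := by
      intro v
      ext w
      simp [hC, reach_top hσ hG]
    rw [Finset.sum_congr rfl fun v _ => by
      rw [hCT v, Finset.card_univ, Fintype.card_fin]]
    simp only [Finset.sum_const, Finset.card_univ, Fintype.card_fin, smul_eq_mul]
  have hfind_mem : ∀ p ∈ Bad, find p ∈ Finset.Icc 1 (k * (k - 1) / 2) := by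
    intro p hp
    rw [hBad] at hp
    obtain ⟨hab, hnr⟩ := hp
    have hσm := Set.mem_Icc.1 (hσ.mapsTo
      (by simpa using hab : s(p.2.1, p.2.2) ∈ {e : Sym2 (Fin k) | ¬ e.IsDiag}))
    have hub : find p ≤ k * (k - 1) / 2 := by
      by_contra h
      push_neg at h
      exact hfm p (k * (k - 1) / 2) (by omega)
        ⟨reach_top hσ hG _ _, reach_top hσ hG _ _⟩
    have hlb : σ s(p.2.1, p.2.2) ≤ find p := by
      by_contra h
      push_neg at h
      obtain ⟨h1, h2⟩ := hfs p
      exact hnr ⟨hrm (by omega) h1, hrm (by omega) h2⟩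
    rw [Finset.mem_Icc]
    omega
  have hdecomp : Bad.card =
      ∑ t ∈ Finset.Icc 1 (k * (k - 1) / 2), #(Bad.filter fun p => find p = t) :=
    Finset.card_eq_sum_card_fiberwise hfind_mem
  have hind : ∀ n, n ≤ k * (k - 1) / 2 →
      (∑ v, ((C 0 v).card * (C 0 v).card + 6 * (C 0 v).card)) +
        3 * ∑ t ∈ Finset.Icc 1 n, #(Bad.filter fun p => find p = t) ≤
      ∑ v, ((C n v).card * (C n v).card + 6 * (C n v).card) := by
    intro n
    induction n with
    | zero => intro _; simp
    | succ m ih =>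
      intro hm
      have hstep := step_phi hσ hG C hC find hfs hfm Bad hBad
        (t := m + 1) (by omega) (by omega)
      simp only [Nat.add_sub_cancel] at hstep
      rw [Finset.sum_Icc_succ_top (by omega : 1 ≤ m + 1)]
      have hih := ih (by omega)
      omega
  have := hind (k * (k - 1) / 2) le_rfl
  omega

end aux3

set_option maxHeartbeats 2000000 in
/-- For `k ≥ 10^8` and any ordering of the edges of `K_k` (with `G t` the
graph of edges `e` with `σ e ≤ t`), there is a vertex `v` such that for at least
`k^2/3 - k^2/(log k)^2` edges `{w_i, w_j}`, just before that edge was added both `w_i`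
and `w_j` were already in the connected component of `v`. -/
theorem stmt_4 (k : ℕ) (hk : 10 ^ 8 ≤ k) (σ : Sym2 (Fin k) → ℕ)
    (hσ : Set.BijOn σ {e : Sym2 (Fin k) | ¬ e.IsDiag} (Set.Icc 1 (k * (k - 1) / 2)))
    (G : ℕ → SimpleGraph (Fin k))
    (hG : ∀ t, G t = SimpleGraph.fromEdgeSet {e : Sym2 (Fin k) | σ e ≤ t}) :
    ∃ v : Fin k,
      (k : ℝ) ^ 2 / 3 - (k : ℝ) ^ 2 / (Real.log k) ^ 2 ≤
        ({e : Sym2 (Fin k) | ¬ e.IsDiag ∧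
            ∀ w ∈ e, (G (σ e - 1)).Reachable v w}.ncard : ℝ) := by
  classical
  have hk1 : 1 ≤ k := le_trans (by norm_num) hk
  -- Set up the counting machinery
  set C : ℕ → Fin k → Finset (Fin k) :=
    fun t v => Finset.univ.filter fun w => (G t).Reachable v w with hCdef
  have hC : ∀ t v w, w ∈ C t v ↔ (G t).Reachable v w := by
    intro t v w
    rw [hCdef]
    simp
  have hex : ∀ p : Fin k × Fin k × Fin k,
      ∃ t, (G t).Reachable p.1 p.2.1 ∧ (G t).Reachable p.1 p.2.2 :=
    fun p => ⟨k * (k - 1) / 2, reach_top hσ hG _ _, reach_top hσ hG _ _⟩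
  set find : Fin k × Fin k × Fin k → ℕ := fun p => Nat.find (hex p) with hfinddef
  have hfs : ∀ p, (G (find p)).Reachable p.1 p.2.1 ∧ (G (find p)).Reachable p.1 p.2.2 :=
    fun p => Nat.find_spec (hex p)
  have hfm : ∀ p m, m < find p →
      ¬((G m).Reachable p.1 p.2.1 ∧ (G m).Reachable p.1 p.2.2) :=
    fun p m hm => Nat.find_min (hex p) hm
  set Bad : Finset (Fin k × Fin k × Fin k) := Finset.univ.filter fun p =>
    p.2.1 ≠ p.2.2 ∧ ¬((G (σ s(p.2.1, p.2.2) - 1)).Reachable p.1 p.2.1 ∧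
      (G (σ s(p.2.1, p.2.2) - 1)).Reachable p.1 p.2.2) with hBaddef
  have hBad : ∀ p, p ∈ Bad ↔ (p.2.1 ≠ p.2.2 ∧
      ¬((G (σ s(p.2.1, p.2.2) - 1)).Reachable p.1 p.2.1 ∧
        (G (σ s(p.2.1, p.2.2) - 1)).Reachable p.1 p.2.2)) := by
    intro p
    rw [hBaddef]
    simp only [Finset.mem_filter, Finset.mem_univ, true_and]
  have hbade := bad_le hσ hG C hC find hfs hfm Bad hBad
  -- good pairs per vertex
  set good : Fin k → Finset (Fin k × Fin k) := fun v => Finset.univ.filter fun q =>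
    q.1 ≠ q.2 ∧ (G (σ s(q.1, q.2) - 1)).Reachable v q.1 ∧
      (G (σ s(q.1, q.2) - 1)).Reachable v q.2 with hgooddef
  have hfib : Bad.card = ∑ v, #(Bad.filter fun p => p.1 = v) :=
    Finset.card_eq_sum_card_fiberwise fun p _ => Finset.mem_univ _
  have hperv : ∀ v, (good v).card + #(Bad.filter fun p => p.1 = v) = k * k - k := by
    intro v
    have hb : #(Bad.filter fun p => p.1 = v) =
        #(Finset.univ.filter fun q : Fin k × Fin k =>
          q.1 ≠ q.2 ∧ ¬((G (σ s(q.1, q.2) - 1)).Reachable v q.1 ∧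
            (G (σ s(q.1, q.2) - 1)).Reachable v q.2)) := by
      refine Finset.card_bij' (fun p _ => p.2) (fun q _ => (v, q)) ?hi ?hj ?li ?ri
      case hi =>
        rintro ⟨v', q⟩ hp
        rw [Finset.mem_filter] at hp
        obtain ⟨hp1, hp2⟩ := hp
        dsimp only at hp2
        subst hp2
        rw [hBad] at hp1
        simp only [Finset.mem_filter, Finset.mem_univ, true_and]
        exact hp1
      case hj =>
        intro q hq
        simp only [Finset.mem_filter, Finset.mem_univ, true_and] at hq
        rw [Finset.mem_filter]
        exact ⟨(hBad (v, q)).2 hq, rfl⟩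
      case li =>
        rintro ⟨v', q⟩ hp
        rw [Finset.mem_filter] at hp
        obtain ⟨hp1, hp2⟩ := hp
        dsimp only at hp2
        subst hp2
        rfl
      case ri =>
        intro q hq
        rfl
    rw [hb]
    have hff := Finset.filter_filter (fun q : Fin k × Fin k => q.1 ≠ q.2)
      (fun q : Fin k × Fin k => (G (σ s(q.1, q.2) - 1)).Reachable v q.1 ∧
        (G (σ s(q.1, q.2) - 1)).Reachable v q.2) Finset.univ
    have hffn := Finset.filter_filter (fun q : Fin k × Fin k => q.1 ≠ q.2)
      (fun q : Fin k × Fin k => ¬((G (σ s(q.1, q.2) - 1)).Reachable v q.1 ∧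
        (G (σ s(q.1, q.2) - 1)).Reachable v q.2)) Finset.univ
    have hsplit := Finset.card_filter_add_card_filter_not
      (s := Finset.univ.filter fun q : Fin k × Fin k => q.1 ≠ q.2)
      (p := fun q => (G (σ s(q.1, q.2) - 1)).Reachable v q.1 ∧
        (G (σ s(q.1, q.2) - 1)).Reachable v q.2)
    rw [hff, hffn] at hsplit
    have hoffcard : #(Finset.univ.filter fun q : Fin k × Fin k => q.1 ≠ q.2) = k * k - k := by
      have : (Finset.univ.filter fun q : Fin k × Fin k => q.1 ≠ q.2) =
          (Finset.univ : Finset (Fin k)).offDiag := by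
        ext q; simp [Finset.mem_offDiag]
      rw [this, Finset.offDiag_card, Finset.card_univ, Fintype.card_fin]
    rw [← hoffcard, ← hsplit, hgooddef]
  have hsum : (∑ v, (good v).card) + Bad.card = k * (k * k - k) := by
    rw [hfib, ← Finset.sum_add_distrib]
    rw [Finset.sum_congr rfl fun v _ => hperv v]
    simp [Finset.card_univ, mul_comm]
  -- choose the best vertex
  obtain ⟨v, -, hv⟩ := Finset.exists_max_image Finset.univ (fun v => (good v).card)
    ⟨⟨0, by omega⟩, Finset.mem_univ _⟩
  have hpig : k * (k * k - k) ≤ k * (good v).card + Bad.card := by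
    have h1 : ∑ u, (good u).card ≤ k * (good v).card := by
      calc ∑ u, (good u).card ≤ Finset.univ.card • (good v).card :=
            Finset.sum_le_card_nsmul _ _ _ fun u _ => hv u (Finset.mem_univ u)
        _ = k * (good v).card := by rw [smul_eq_mul, Finset.card_univ, Fintype.card_fin]
    omega
  -- relate good pairs to the Sym2 set
  refine ⟨v, ?_⟩
  set S := {e : Sym2 (Fin k) | ¬ e.IsDiag ∧
    ∀ w ∈ e, (G (σ e - 1)).Reachable v w} with hSdef
  have hSfin : S.Finite := S.toFinite
  have himg : ((good v).image fun q => s(q.1, q.2)) ⊆ hSfin.toFinset := by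
    intro e he
    rw [Finset.mem_image] at he
    obtain ⟨⟨a, b⟩, hq, rfl⟩ := he
    rw [hgooddef] at hq
    simp only [Finset.mem_filter, Finset.mem_univ, true_and] at hq
    obtain ⟨hab, h1, h2⟩ := hq
    rw [Set.Finite.mem_toFinset, hSdef, Set.mem_setOf_eq]
    refine ⟨by simpa using hab, ?_⟩
    intro w hw
    rw [Sym2.mem_iff] at hw
    rcases hw with rfl | rfl
    · exact h1
    · exact h2
  have hgood2 : (good v).card ≤ 2 * ((good v).image fun q => s(q.1, q.2)).card := by
    apply Finset.card_le_mul_card_image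
    intro e he
    rw [Finset.mem_image] at he
    obtain ⟨⟨a, b⟩, hq, rfl⟩ := he
    have hsub : ((good v).filter fun x => s(x.1, x.2) = s(a, b)) ⊆
        ({(a, b), (b, a)} : Finset (Fin k × Fin k)) := by
      rintro ⟨c, d⟩ hx
      rw [Finset.mem_filter] at hx
      have := Sym2.eq_iff.1 hx.2
      simp only [Finset.mem_insert, Finset.mem_singleton, Prod.mk.injEq]
      tauto
    refine (Finset.card_le_card hsub).trans ?_
    refine (Finset.card_insert_le _ _).trans ?_
    simp
  have hcard : (good v).card ≤ 2 * S.ncard := by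
    rw [Set.ncard_eq_toFinset_card _ hSfin]
    exact hgood2.trans (Nat.mul_le_mul_left 2 (Finset.card_le_card himg))
  -- now the numeric endgame, in ℝ
  set K := (k : ℝ) with hKdef
  have hK0 : (0 : ℝ) < K := by
    rw [hKdef]; exact_mod_cast Nat.lt_of_lt_of_le (by norm_num) hk
  have hK1 : (1 : ℝ) < K := by
    rw [hKdef]; exact_mod_cast Nat.lt_of_lt_of_le (by norm_num) hk
  have hK576 : (576 : ℝ) ≤ K := by
    rw [hKdef]; exact_mod_cast Nat.le_trans (by norm_num) hk
  have hA : 7 * K + 3 * (Bad.card : ℝ) ≤ K ^ 3 + 6 * K ^ 2 := by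
    have := hbade
    have hcast : ((7 * k + 3 * Bad.card : ℕ) : ℝ) ≤ ((k * (k * k + 6 * k) : ℕ) : ℝ) := by
      exact_mod_cast this
    push_cast at hcast
    rw [hKdef]; nlinarith [hcast]
  have hB : K * ((good v).card : ℝ) + (Bad.card : ℝ) ≥ K ^ 3 - K ^ 2 := by
    have hcast : ((k * (k * k - k) : ℕ) : ℝ) ≤ ((k * (good v).card + Bad.card : ℕ) : ℝ) := by
      exact_mod_cast hpig
    have hkk : ((k * k - k : ℕ) : ℝ) = K * K - K := by
      have : k ≤ k * k := Nat.le_mul_of_pos_left k (by omega)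
      push_cast [this]
      ring
    push_cast [hkk] at hcast
    rw [hKdef]; nlinarith [hcast]
  have hD : ((good v).card : ℝ) ≤ 2 * (S.ncard : ℝ) := by exact_mod_cast hcard
  -- log bound
  have hlogpos : 0 < Real.log K := Real.log_pos hK1
  have hlog4 : Real.log K ≤ 4 * K ^ ((1 : ℝ) / 4) := by
    have h := Real.log_le_rpow_div hK0.le (by norm_num : (0 : ℝ) < 1 / 4)
    have : K ^ ((1 : ℝ) / 4) / (1 / 4) = 4 * K ^ ((1 : ℝ) / 4) := by ring
    linarith [h, this.le]
  have hrq : K ^ ((1 : ℝ) / 4) * K ^ ((1 : ℝ) / 4) = K ^ ((1 : ℝ) / 2) := by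
    rw [← Real.rpow_add hK0]; norm_num
  have hhalf : K ^ ((1 : ℝ) / 2) * K ^ ((1 : ℝ) / 2) = K := by
    rw [← Real.rpow_add hK0]; norm_num
  have hq0 : (0 : ℝ) ≤ K ^ ((1 : ℝ) / 4) := Real.rpow_nonneg hK0.le _
  have hh0 : (0 : ℝ) ≤ K ^ ((1 : ℝ) / 2) := Real.rpow_nonneg hK0.le _
  have hsq : Real.log K ^ 2 ≤ 16 * K ^ ((1 : ℝ) / 2) := by
    have h := mul_le_mul hlog4 hlog4 hlogpos.le (by positivity)
    calc Real.log K ^ 2 = Real.log K * Real.log K := sq (Real.log K)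
      _ ≤ (4 * K ^ ((1 : ℝ) / 4)) * (4 * K ^ ((1 : ℝ) / 4)) := h
      _ = 16 * (K ^ ((1 : ℝ) / 4) * K ^ ((1 : ℝ) / 4)) := by ring
      _ = 16 * K ^ ((1 : ℝ) / 2) := by rw [hrq]
  have h24 : (24 : ℝ) ≤ K ^ ((1 : ℝ) / 2) := by
    have h576 : ((576 : ℝ)) ^ ((1 : ℝ) / 2) = 24 := by
      rw [show (576 : ℝ) = 24 ^ (2 : ℕ) by norm_num, ← Real.rpow_natCast (24 : ℝ) 2,
        ← Real.rpow_mul (by norm_num : (0 : ℝ) ≤ 24)]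
      norm_num
    calc (24 : ℝ) = (576 : ℝ) ^ ((1 : ℝ) / 2) := h576.symm
      _ ≤ K ^ ((1 : ℝ) / 2) := Real.rpow_le_rpow (by norm_num) hK576 (by norm_num)
  have hlogK : Real.log K ^ 2 ≤ 2 / 3 * K := by
    have h1 : 24 * K ^ ((1 : ℝ) / 2) ≤ K ^ ((1 : ℝ) / 2) * K ^ ((1 : ℝ) / 2) :=
      mul_le_mul_of_nonneg_right h24 hh0
    rw [hhalf] at h1
    linarith [hsq]
  have hfrac : 3 / 2 * K ≤ K ^ 2 / Real.log K ^ 2 := by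
    have hlog2 : 0 < Real.log K ^ 2 := by positivity
    have h1 : K ^ 2 / (2 / 3 * K) ≤ K ^ 2 / Real.log K ^ 2 :=
      div_le_div_of_nonneg_left (by positivity) hlog2 hlogK
    have h2 : K ^ 2 / (2 / 3 * K) = 3 / 2 * K := by
      field_simp
    linarith
  -- combine
  have hNc : K ^ 2 / 3 - 3 / 2 * K ≤ (S.ncard : ℝ) := by
    have hmul : K * ((good v).card : ℝ) ≤ K * (2 * (S.ncard : ℝ)) :=
      mul_le_mul_of_nonneg_left hD hK0.le
    nlinarith [hmul, hA, hB, hK0]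
  calc K ^ 2 / 3 - K ^ 2 / Real.log K ^ 2 ≤ K ^ 2 / 3 - 3 / 2 * K := by linarith
    _ ≤ (S.ncard : ℝ) := hNc
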